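/- Let k ≥ 2 be an integer and let Λ ⊆ F_2^n belong to the family 𝚲(2k). Then for every integer p with 2 ≤ p ≤ k one has T_p(Λ) ≤ p^p |Λ|^p. -/

import Mathlib

open Finset

/-- `T_k(A)`: the number of `2k`-tuples `(a_1,…,a_k,a'_1,…,a'_k) ∈ A^{2k}` with
`a_1+⋯+a_k = a'_1+⋯+a'_k`. -/
def addEnergy {G : Type*} [AddCommGroup G] [DecidableEq G] (k : ℕ) (A : Finset G) : ℕ :=
  (((Fintype.piFinset fun _ : Fin k => A) ×ˢ (Fintype.piFinset fun _ : Fin k => A)).filter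
    fun v => ∑ i, v.1 i = ∑ i, v.2 i).card

/-- `Λ` belongs to the family `𝚲(m)`: no nonempty subset of `Λ` of size at most `m`
has zero sum. -/
def InLambdaFamily {G : Type*} [AddCommGroup G] (m : ℕ) (Λ : Finset G) : Prop :=
  ∀ S ⊆ Λ, S.Nonempty → S.card ≤ m → ∑ x ∈ S, x ≠ 0

section Aux

variable {G : Type*} [AddCommGroup G] [DecidableEq G]

/-- number of occurrences of `g` in the tuple `w`. -/
def cnt {m : ℕ} (w : Fin m → G) (g : G) : ℕ := ∑ i, if w i = g then 1 else 0

/-- tuples with entries in `Λ` in which every element of `Λ` occurs an even number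
of times. -/
def Ev (Λ : Finset G) (m : ℕ) : Finset (Fin m → G) :=
  (Fintype.piFinset fun _ : Fin m => Λ).filter fun w => ∀ g ∈ Λ, Even (cnt w g)

lemma mem_Ev {Λ : Finset G} {m : ℕ} {w : Fin m → G} :
    w ∈ Ev Λ m ↔ (∀ i, w i ∈ Λ) ∧ ∀ g ∈ Λ, Even (cnt w g) := by
  simp [Ev, Fintype.mem_piFinset]

lemma cnt_pos_exists {m : ℕ} {w : Fin m → G} {g : G} (h : cnt w g ≠ 0) : ∃ i, w i = g := by
  by_contra hc
  push_neg at hc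
  exact h (by simp [cnt, hc])

lemma cnt_succ {m : ℕ} (w : Fin (m + 1) → G) (g : G) :
    cnt w g = cnt (Fin.init w) g + (if w (Fin.last m) = g then 1 else 0) := by
  simp only [cnt, Fin.sum_univ_castSucc, Fin.init]
  rfl

lemma cnt_removeNth {m : ℕ} (w : Fin (m + 1) → G) (j : Fin (m + 1)) (g : G) :
    cnt w g = (if w j = g then 1 else 0) + cnt (j.removeNth w) g := by
  simp only [cnt, Fin.removeNth]
  exact Fin.sum_univ_succAbove (fun i => if w i = g then 1 else 0) j

lemma Ev_step (Λ : Finset G) (m : ℕ) :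
    (Ev Λ (m + 2)).card ≤ ((m + 1) * Λ.card) * (Ev Λ m).card := by
  classical
  have hcard : (((univ : Finset (Fin (m + 1))) ×ˢ (Λ ×ˢ Ev Λ m)).card)
      = ((m + 1) * Λ.card) * (Ev Λ m).card := by
    simp [Finset.card_product, mul_assoc]
  rw [← hcard]
  have key : ∀ w ∈ Ev Λ (m + 2), ∃ j, Fin.init w j = w (Fin.last (m + 1)) := by
    intro w hw
    rw [mem_Ev] at hw
    have hv : w (Fin.last (m + 1)) ∈ Λ := hw.1 _
    have he := hw.2 _ hv
    have hne : cnt (Fin.init w) (w (Fin.last (m + 1))) ≠ 0 := by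
      intro h0
      rw [cnt_succ, h0, if_pos rfl] at he
      simp at he
    exact cnt_pos_exists hne
  set f : (Fin (m + 2) → G) → Fin (m + 1) × G × (Fin m → G) := fun w =>
    if h : ∃ j, Fin.init w j = w (Fin.last (m + 1)) then
      (h.choose, w (Fin.last (m + 1)), Fin.removeNth h.choose (Fin.init w))
    else (0, 0, fun _ => 0) with hf
  apply Finset.card_le_card_of_injOn f
  · intro w hw
    have h := key w hw
    rw [Finset.mem_coe, mem_Ev] at hw
    simp only [hf, dif_pos h]
    rw [Finset.mem_coe, Finset.mem_product, Finset.mem_product]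
    dsimp only
    refine ⟨Finset.mem_univ _, hw.1 _, ?_⟩
    rw [mem_Ev]
    constructor
    · intro i
      exact hw.1 _
    · intro g hg
      have hwg := hw.2 g hg
      rw [cnt_succ, cnt_removeNth (Fin.init w) h.choose, h.choose_spec] at hwg
      by_cases hvg : w (Fin.last (m + 1)) = g
      · rw [if_pos hvg] at hwg
        rw [Nat.even_iff] at hwg ⊢
        omega
      · rw [if_neg hvg] at hwg
        simpa using hwg
  · have hrec : ∀ w ∈ Ev Λ (m + 2),
        w = Fin.snoc (Fin.insertNth (f w).1 (f w).2.1 (f w).2.2) (f w).2.1 := by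
      intro w hw
      have h := key w hw
      simp only [hf, dif_pos h]
      have key1 := Fin.insertNth_self_removeNth h.choose (Fin.init w)
      rw [h.choose_spec] at key1
      rw [key1, Fin.snoc_init_self]
    intro w₁ h₁ w₂ h₂ heq
    rw [hrec w₁ (Finset.mem_coe.mp h₁), hrec w₂ (Finset.mem_coe.mp h₂), heq]

lemma pow_succ_aux : ∀ n m : ℕ, m ^ (n + 1) + (n + 1) * m ^ n ≤ (m + 1) ^ (n + 1) := by
  intro n m
  induction n with
  | zero => simp
  | succ n ih =>
    calc m ^ (n + 2) + (n + 2) * m ^ (n + 1)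
        ≤ m ^ (n + 2) + (n + 2) * m ^ (n + 1) + (n + 1) * m ^ n := Nat.le_add_right _ _
      _ = (m ^ (n + 1) + (n + 1) * m ^ n) * (m + 1) := by ring
      _ ≤ (m + 1) ^ (n + 1) * (m + 1) := Nat.mul_le_mul_right _ ih
      _ = (m + 1) ^ (n + 2) := by ring

lemma two_mul_pow_le {p : ℕ} (hp : 1 ≤ p) : 2 * p ^ p ≤ (p + 1) ^ p := by
  obtain ⟨q, rfl⟩ : ∃ q, p = q + 1 := ⟨p - 1, by omega⟩
  calc 2 * (q + 1) ^ (q + 1) = (q + 1) ^ (q + 1) + (q + 1) * (q + 1) ^ q := by ring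
    _ ≤ ((q + 1) + 1) ^ (q + 1) := pow_succ_aux q (q + 1)

lemma prodOdd_le : ∀ q : ℕ, (∏ i ∈ range q, (2 * i + 1)) ≤ q ^ q := by
  intro q
  induction q with
  | zero => simp
  | succ q ih =>
    rw [prod_range_succ]
    rcases Nat.eq_zero_or_pos q with hq | hq
    · subst hq; simp
    · have h2 := two_mul_pow_le hq
      calc (∏ i ∈ range q, (2 * i + 1)) * (2 * q + 1) ≤ q ^ q * (2 * q + 1) :=
            Nat.mul_le_mul_right _ ih
        _ ≤ q ^ q * (2 * q + 2) := Nat.mul_le_mul_left _ (by omega)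
        _ = (2 * q ^ q) * (q + 1) := by ring
        _ ≤ (q + 1) ^ q * (q + 1) := Nat.mul_le_mul_right _ h2
        _ = (q + 1) ^ (q + 1) := (pow_succ _ _).symm

lemma Ev_card (Λ : Finset G) : ∀ q : ℕ,
    (Ev Λ (2 * q)).card ≤ (∏ i ∈ range q, (2 * i + 1)) * Λ.card ^ q := by
  intro q
  induction q with
  | zero =>
    simp only [Nat.mul_zero, prod_range_zero, pow_zero, mul_one]
    exact Finset.card_le_one.mpr fun a _ b _ => funext fun i => i.elim0
  | succ q ih =>
    have step := Ev_step Λ (2 * q)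
    calc (Ev Λ (2 * (q + 1))).card = (Ev Λ (2 * q + 2)).card := by rw [Nat.mul_succ]
      _ ≤ ((2 * q + 1) * Λ.card) * (Ev Λ (2 * q)).card := step
      _ ≤ ((2 * q + 1) * Λ.card) * ((∏ i ∈ range q, (2 * i + 1)) * Λ.card ^ q) :=
          Nat.mul_le_mul_left _ ih
      _ = (∏ i ∈ range (q + 1), (2 * i + 1)) * Λ.card ^ (q + 1) := by
          rw [prod_range_succ]; ring

lemma nsmul_char2 {H : Type*} [AddCommMonoid H] (hH : ∀ x : H, x + x = 0) :
    ∀ (c : ℕ) (x : H), c • x = if Even c then 0 else x := by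
  intro c x
  induction c with
  | zero => simp
  | succ c ih =>
    rw [succ_nsmul, ih]
    by_cases hc : Even c
    · simp [hc, Nat.even_add_one]
    · simp [hc, Nat.even_add_one, hH x]

lemma sum_eq_sum_cnt {m : ℕ} (Λ : Finset G) (w : Fin m → G) (hw : ∀ i, w i ∈ Λ) :
    ∑ i, w i = ∑ g ∈ Λ, (cnt w g) • g := by
  have h1 : ∀ g ∈ Λ, (cnt w g) • g = ∑ i, (if w i = g then g else 0) := by
    intro g _
    rw [cnt, Finset.sum_smul]
    exact Finset.sum_congr rfl fun i _ => by split <;> simp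
  rw [Finset.sum_congr rfl h1, Finset.sum_comm]
  refine Finset.sum_congr rfl fun i _ => ?_
  rw [Finset.sum_ite_eq Λ (w i) (fun g => g)]
  simp [hw i]

lemma total_cnt {m : ℕ} (Λ : Finset G) (w : Fin m → G) (hw : ∀ i, w i ∈ Λ) :
    ∑ g ∈ Λ, cnt w g = m := by
  unfold cnt
  rw [Finset.sum_comm]
  have : ∀ i : Fin m, (∑ g ∈ Λ, if w i = g then 1 else 0) = 1 := by
    intro i
    rw [Finset.sum_ite_eq Λ (w i) (fun _ => 1)]
    simp [hw i]
  rw [Finset.sum_congr rfl fun i _ => this i]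
  simp

end Aux

theorem stmt2 {n : ℕ} (k : ℕ) (hk : 2 ≤ k) (Λ : Finset (Fin n → ZMod 2))
    (hΛ : InLambdaFamily (2 * k) Λ) :
    ∀ p : ℕ, 2 ≤ p → p ≤ k → addEnergy p Λ ≤ p ^ p * Λ.card ^ p := by
  intro p hp2 hpk
  classical
  have hchar : ∀ x : Fin n → ZMod 2, x + x = 0 := by
    intro x
    funext i
    simp only [Pi.add_apply, Pi.zero_apply]
    rw [← two_mul, show (2 : ZMod 2) = 0 by decide, zero_mul]
  have hinj : addEnergy p Λ ≤ (Ev Λ (p + p)).card := by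
    unfold _root_.addEnergy
    apply Finset.card_le_card_of_injOn (fun v => Fin.append v.1 v.2)
    · intro v hv
      simp only [Finset.mem_coe, Finset.mem_filter, Finset.mem_product, Fintype.mem_piFinset] at hv
      obtain ⟨⟨hm1, hm2⟩, hsum⟩ := hv
      have hwΛ : ∀ i, Fin.append v.1 v.2 i ∈ Λ := by
        intro i
        refine Fin.addCases (fun i => ?_) (fun i => ?_) i
        · rw [Fin.append_left]; exact hm1 i
        · rw [Fin.append_right]; exact hm2 i
      rw [Finset.mem_coe, mem_Ev]
      refine ⟨hwΛ, ?_⟩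
      intro g hg
      by_contra hodd
      set w := Fin.append v.1 v.2 with hwdef
      set S := Λ.filter fun g => ¬ Even (cnt w g) with hS
      have hSne : S.Nonempty := ⟨g, Finset.mem_filter.mpr ⟨hg, hodd⟩⟩
      have hsum0 : ∑ x ∈ S, x = 0 := by
        have e2 : ∑ i, w i = 0 := by
          rw [hwdef, Fin.sum_univ_add]
          simp only [Fin.append_left, Fin.append_right]
          rw [← hsum]
          exact hchar _
        rw [sum_eq_sum_cnt Λ w hwΛ] at e2
        rw [Finset.sum_congr rfl fun g _ => nsmul_char2 hchar (cnt w g) g] at e2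
        rw [hS, Finset.sum_filter]
        simp only [ite_not]
        exact e2
      have hcard : S.card ≤ 2 * k := by
        have h1 : S.card ≤ ∑ g ∈ S, cnt w g := by
          rw [Finset.card_eq_sum_ones]
          refine Finset.sum_le_sum fun g hg => ?_
          have := (Finset.mem_filter.mp hg).2
          have hne : cnt w g ≠ 0 := fun h0 => this (h0 ▸ Even.zero)
          omega
        have h2 : ∑ g ∈ S, cnt w g ≤ ∑ g ∈ Λ, cnt w g :=
          Finset.sum_le_sum_of_subset (Finset.filter_subset _ _)
        rw [total_cnt Λ w hwΛ] at h2
        omega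
      exact absurd hsum0 (hΛ S (Finset.filter_subset _ _) hSne hcard)
    · intro v1 _ v2 _ h
      have h1 : v1.1 = v2.1 := funext fun i => by
        have := congrFun h (Fin.castAdd p i)
        simpa [Fin.append_left] using this
      have h2 : v1.2 = v2.2 := funext fun i => by
        have := congrFun h (Fin.natAdd p i)
        dsimp only at this
        rwa [Fin.append_right, Fin.append_right] at this
      exact Prod.ext h1 h2
  have heq : (Ev Λ (p + p)).card = (Ev Λ (2 * p)).card := by rw [two_mul]
  calc addEnergy p Λ ≤ (Ev Λ (2 * p)).card := heq ▸ hinj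
    _ ≤ (∏ i ∈ range p, (2 * i + 1)) * Λ.card ^ p := Ev_card Λ p
    _ ≤ p ^ p * Λ.card ^ p := Nat.mul_le_mul_right _ (prodOdd_le p)
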